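/- In the Laurent polynomial ring ℤ[q_1,q_2][t_1^{±1},t_2^{±1},t_3^{±1}], substituting t_1 + q_1/t_2 and t_2 + q_2/t_3 for the two t-variables of Δ_{1,2} gives Δ_{1,2}(q_1, q_2, t_1 + q_1/t_2, t_2 + q_2/t_3) = (t_1t_2²t_3 + q_2(t_1t_2 − t_2t_3) + q_1q_2)/(t_2t_3); moreover this element is NOT a ℤ_{≥0}-linear combination of Laurent monomials in t_1, t_2, t_3 with polynomial monomials in q_1, q_2, i.e. it does not lie in ℤ_{≥0}[q_1,q_2,t_1^{±1},t_2^{±1},t_3^{±1}]. -/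

import Mathlib

noncomputable section

/-- The quantized generalized Chebyshev polynomials, evaluated in any commutative
ring: `genCheb n q t` is `P_n(q_1,…,q_n,t_1,…,t_n)` (indices are 1-based), defined by
`P_0 = 1`, `P_1 = t_1`, `P_n = t_n·P_{n-1} - q_n·P_{n-2}`. -/
def genCheb {R : Type*} [CommRing R] : ℕ → (ℕ → R) → (ℕ → R) → R
  | 0, _, _ => 1
  | 1, _, t => t 1
  | n + 2, q, t => t (n + 2) * genCheb (n + 1) q t - q (n + 2) * genCheb n q t

/-- The Δ-polynomial:
`Δ(N; q, t) = P_N(q_1,…,q_N,t_1,…,t_N) - q_1·P_{N-2}(q_2,…,q_{N-1},t_2,…,t_{N-1})`.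
For `N = 2` this is `Δ_{1,2}(q_1,q_2,t_1,t_2) = t_2·t_1 - q_2 - q_1`. -/
def Delta {R : Type*} [CommRing R] (N : ℕ) (q t : ℕ → R) : R :=
  genCheb N q t - q 1 * genCheb (N - 2) (fun j => q (1 + j)) (fun j => t (1 + j))

/-- The Laurent polynomial ring `ℤ[q_1,q_2,…][t_1^{±1},t_2^{±1},…]`,
realized as the monoid algebra over `ℤ[q_1,q_2,…]` of the group of Laurent
monomials in the `t`'s. -/
abbrev LaurentQ : Type := AddMonoidAlgebra (MvPolynomial ℕ ℤ) (ℕ →₀ ℤ)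

/-- The element `q_i`. -/
def ql (i : ℕ) : LaurentQ := AddMonoidAlgebra.single 0 (MvPolynomial.X i)

/-- The element `t_j`. -/
def tl (j : ℕ) : LaurentQ := AddMonoidAlgebra.single (Finsupp.single j 1) 1

/-- The element `t_j⁻¹`. -/
def tlinv (j : ℕ) : LaurentQ := AddMonoidAlgebra.single (Finsupp.single j (-1)) 1

/-! ### Auxiliary material -/

/-- The "nonnegative model" of `LaurentQ`, with `ℕ` coefficients. -/
abbrev LaurentN : Type := AddMonoidAlgebra (MvPolynomial ℕ ℕ) (ℕ →₀ ℤ)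

/-- The coefficient-wise inclusion `LaurentN →+* LaurentQ`. -/
def phi : LaurentN →+* LaurentQ :=
  AddMonoidAlgebra.liftNCRingHom
    ((AddMonoidAlgebra.singleZeroRingHom).comp (MvPolynomial.map (Nat.castRingHom ℤ)))
    (AddMonoidAlgebra.of (MvPolynomial ℕ ℤ) (ℕ →₀ ℤ))
    (fun _ _ => Commute.all _ _)

theorem phi_single (a : ℕ →₀ ℤ) (b : MvPolynomial ℕ ℕ) :
    phi (AddMonoidAlgebra.single a b) =
      AddMonoidAlgebra.single a (MvPolynomial.map (Nat.castRingHom ℤ) b) := by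
  simp [phi, AddMonoidAlgebra.liftNCRingHom, AddMonoidAlgebra.liftNC_single,
    AddMonoidAlgebra.singleZeroRingHom, AddMonoidAlgebra.of_apply,
    AddMonoidAlgebra.single_mul_single]

theorem phi_coeff_nonneg (y : LaurentN) : ∀ (m : ℕ →₀ ℤ) (d : ℕ →₀ ℕ),
    0 ≤ ((phi y).coeff m).coeff d := by
  induction y using AddMonoidAlgebra.induction_on with
  | of g =>
    intro m d
    rw [show AddMonoidAlgebra.of (MvPolynomial ℕ ℕ) (ℕ →₀ ℤ) (Multiplicative.ofAdd g)
        = AddMonoidAlgebra.single g 1 from rfl, phi_single]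
    rw [AddMonoidAlgebra.coeff_single_apply]
    split
    · simp [MvPolynomial.coeff_one]
      split <;> norm_num
    · simp
  | add f g hf hg =>
    intro m d
    rw [map_add]
    rw [AddMonoidAlgebra.coeff_add, Finsupp.add_apply, MvPolynomial.coeff_add]
    exact add_nonneg (hf m d) (hg m d)
  | smul r f hf =>
    intro m d
    have h1 : r • f = AddMonoidAlgebra.single 0 r * f := by
      ext x
      rw [AddMonoidAlgebra.coeff_single_zero_mul, AddMonoidAlgebra.coeff_smul, Finsupp.smul_apply, smul_eq_mul]
    rw [h1, map_mul, phi_single, AddMonoidAlgebra.coeff_single_zero_mul,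
      MvPolynomial.coeff_mul]
    refine Finset.sum_nonneg fun p _ => mul_nonneg ?_ (hf m p.2)
    rw [MvPolynomial.coeff_map]
    exact Int.natCast_nonneg _

theorem tl_mul_tlinv (j : ℕ) : tl j * tlinv j = 1 := by
  rw [tl, tlinv, AddMonoidAlgebra.single_mul_single]
  rw [show Finsupp.single j (1 : ℤ) + Finsupp.single j (-1) = 0 by
    rw [← Finsupp.single_add]; norm_num]
  simp [AddMonoidAlgebra.one_def]

theorem Delta_eq :
    Delta 2 (fun i => ql i) (fun i => tl i + ql i * tlinv (i + 1)) =
      tl 1 * tl 2 + ql 2 * (tl 1 * tlinv 3) + ql 1 * ql 2 * (tlinv 2 * tlinv 3) - ql 2 := by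
  have h2 := tl_mul_tlinv 2
  simp only [Delta, genCheb, Nat.sub_self]
  linear_combination ql 1 * h2

theorem ql_in_range (i : ℕ) : ql i ∈ RingHom.rangeS phi :=
  ⟨AddMonoidAlgebra.single 0 (MvPolynomial.X i), by rw [phi_single]; simp [ql]⟩

theorem tl_in_range (j : ℕ) : tl j ∈ RingHom.rangeS phi :=
  ⟨AddMonoidAlgebra.single (Finsupp.single j 1) 1, by rw [phi_single]; simp [tl]⟩

theorem tlinv_in_range (j : ℕ) : tlinv j ∈ RingHom.rangeS phi :=
  ⟨AddMonoidAlgebra.single (Finsupp.single j (-1)) 1, by rw [phi_single]; simp [tlinv]⟩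

/-- `Δ_{1,2}(q_1, q_2, t_1 + q_1/t_2, t_2 + q_2/t_3)
= (t_1·t_2²·t_3 + q_2·(t_1·t_2 - t_2·t_3) + q_1·q_2)/(t_2·t_3)` (stated by
multiplying through by the unit `t_2·t_3`), and this element does NOT lie in
`ℤ_{≥0}[q_1,q_2,t_1^{±1},t_2^{±1},t_3^{±1}]`. -/
theorem Delta12_subst_noncyclic :
    Delta 2 (fun i => ql i) (fun i => tl i + ql i * tlinv (i + 1)) *
        (tl 2 * tl 3) =
      tl 1 * tl 2 ^ 2 * tl 3 + ql 2 * (tl 1 * tl 2 - tl 2 * tl 3) + ql 1 * ql 2 ∧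
    Delta 2 (fun i => ql i) (fun i => tl i + ql i * tlinv (i + 1)) ∉
      Subsemiring.closure
        {x : LaurentQ |
          ∃ i, 1 ≤ i ∧ i ≤ 3 ∧ ((i ≤ 2 ∧ x = ql i) ∨ x = tl i ∨ x = tlinv i)} := by
  have h2 := tl_mul_tlinv 2
  have h3 := tl_mul_tlinv 3
  constructor
  · rw [Delta_eq]
    linear_combination (ql 2 * tl 1 * tl 2 + ql 1 * ql 2 * tl 2 * tlinv 2) * h3 +
      ql 1 * ql 2 * h2
  · intro hmem
    -- closure of generators is contained in the range of `phi`
    have hsub : Subsemiring.closure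
        {x : LaurentQ |
          ∃ i, 1 ≤ i ∧ i ≤ 3 ∧ ((i ≤ 2 ∧ x = ql i) ∨ x = tl i ∨ x = tlinv i)} ≤
        RingHom.rangeS phi := by
      rw [Subsemiring.closure_le]
      rintro x ⟨i, -, -, (⟨-, rfl⟩ | rfl | rfl)⟩
      · exact ql_in_range i
      · exact tl_in_range i
      · exact tlinv_in_range i
    obtain ⟨y, hy⟩ := hsub hmem
    have hnn : 0 ≤ ((phi y).coeff 0).coeff (Finsupp.single 2 1) := phi_coeff_nonneg y 0 _
    rw [hy] at hnn
    -- compute the actual coefficient: it is `-1`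
    have e1 : (Finsupp.single 1 (1:ℤ) + Finsupp.single 2 1 : ℕ →₀ ℤ) ≠ 0 := by
      intro h; have := DFunLike.congr_fun h 1; simp at this
    have e2 : ((0 : ℕ →₀ ℤ) + (Finsupp.single 1 (1:ℤ) + Finsupp.single 3 (-1)) : ℕ →₀ ℤ) ≠ 0 := by
      intro h; have := DFunLike.congr_fun h 1; simp at this
    have e3 : ((0 : ℕ →₀ ℤ) + (0 : ℕ →₀ ℤ) +
        (Finsupp.single 2 (-1:ℤ) + Finsupp.single 3 (-1)) : ℕ →₀ ℤ) ≠ 0 := by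
      intro h; have := DFunLike.congr_fun h 2; simp at this
    rw [Delta_eq] at hnn
    rw [show (tl 1 * tl 2 + ql 2 * (tl 1 * tlinv 3) + ql 1 * ql 2 * (tlinv 2 * tlinv 3) - ql 2)
      = AddMonoidAlgebra.single (Finsupp.single 1 (1:ℤ) + Finsupp.single 2 1) (1 : MvPolynomial ℕ ℤ)
        + AddMonoidAlgebra.single ((0 : ℕ →₀ ℤ) + (Finsupp.single 1 (1:ℤ) + Finsupp.single 3 (-1)))
            (MvPolynomial.X 2 * (1 * 1))
        + AddMonoidAlgebra.single ((0 : ℕ →₀ ℤ) + (0 : ℕ →₀ ℤ) +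
            (Finsupp.single 2 (-1:ℤ) + Finsupp.single 3 (-1)))
            (MvPolynomial.X 1 * MvPolynomial.X 2 * (1 * 1))
        - AddMonoidAlgebra.single 0 (MvPolynomial.X 2) by
      simp only [ql, tl, tlinv, AddMonoidAlgebra.single_mul_single, one_mul, mul_one]] at hnn
    rw [AddMonoidAlgebra.coeff_sub, AddMonoidAlgebra.coeff_add, AddMonoidAlgebra.coeff_add,
      Finsupp.sub_apply, Finsupp.add_apply, Finsupp.add_apply] at hnn
    rw [AddMonoidAlgebra.coeff_single, AddMonoidAlgebra.coeff_single, AddMonoidAlgebra.coeff_single,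
      AddMonoidAlgebra.coeff_single, Finsupp.single_apply, Finsupp.single_apply, Finsupp.single_apply,
      Finsupp.single_apply, if_neg e1, if_neg e2, if_neg e3, if_pos rfl] at hnn
    simp [MvPolynomial.coeff_X] at hnn
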